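/- The limit as g → 1 of χ₀⁻(g) = −(N²/(16g²)) g^N/(g^N−1)² + (N/(16g²)) (g^N + g²)/((g^N−1)(g²−1)) equals (N² − 3N + 2)/96 for integer N ≥ 2. -/

import Mathlib

open Filter

open Finset

noncomputable def Sg (N : ℕ) (g : ℝ) : ℝ := ∑ i ∈ range N, g ^ i
noncomputable def ug (N : ℕ) (g : ℝ) : ℝ := ∑ i ∈ range N, ∑ j ∈ range i, g ^ j
noncomputable def vg (N : ℕ) (g : ℝ) : ℝ :=
  ∑ i ∈ range N, g ^ i * ∑ k ∈ range (N - 1 - i), g ^ k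
noncomputable def Wg (N : ℕ) (g : ℝ) : ℝ := g ^ N * ug N g - g ^ 2 * vg N g

lemma lemA (N : ℕ) (g : ℝ) : Sg N g - N = (g - 1) * ug N g := by
  have : ∀ i ∈ range N, g ^ i - 1 = (g - 1) * ∑ j ∈ range i, g ^ j := by
    intro i _
    rw [mul_comm, geom_sum_mul]
  rw [Sg, ug, Finset.mul_sum, ← Finset.sum_congr rfl this, Finset.sum_sub_distrib]
  simp
lemma lemB (N : ℕ) (hN : 1 ≤ N) (g : ℝ) :
    (N : ℝ) * g ^ (N - 1) - Sg N g = (g - 1) * vg N g := by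
  have : ∀ i ∈ range N, g ^ (N-1) - g ^ i
      = (g - 1) * (g ^ i * ∑ k ∈ range (N - 1 - i), g ^ k) := by
    intro i hi
    rw [mem_range] at hi
    have h1 : i + (N - 1 - i) = N - 1 := by omega
    have h2 : (∑ k ∈ range (N - 1 - i), g ^ k) * (g - 1) = g ^ (N-1-i) - 1 :=
      geom_sum_mul g (N-1-i)
    calc g ^ (N-1) - g ^ i = g ^ i * (g ^ (N-1-i) - 1) := by
          rw [mul_sub, mul_one, ← pow_add, h1]
      _ = (g - 1) * (g ^ i * ∑ k ∈ range (N - 1 - i), g ^ k) := by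
          rw [← h2]; ring
  rw [Sg, vg, Finset.mul_sum, ← Finset.sum_congr rfl this, Finset.sum_sub_distrib]
  simp [mul_comm]

lemma lemC (N : ℕ) (hN : 2 ≤ N) (g : ℝ) :
    (g ^ N + g ^ 2) * Sg N g - N * g ^ N * (g + 1) = (g - 1) * Wg N g := by
  obtain ⟨m, rfl⟩ : ∃ m, N = m + 2 := ⟨N - 2, by omega⟩
  have hA := lemA (m+2) g
  have hB := lemB (m+2) (by omega) g
  rw [Wg]
  have hm : m + 2 - 1 = m + 1 := rfl
  rw [hm] at hB
  linear_combination (g ^ (m+2)) * hA - g ^ 2 * hB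

lemma sum_id (n : ℕ) : ∑ i ∈ range n, (i : ℝ) = n * (n - 1) / 2 := by
  induction n with
  | zero => simp
  | succ n ih => rw [Finset.sum_range_succ, ih]; push_cast; ring

lemma sum_sq (n : ℕ) : ∑ i ∈ range n, (i : ℝ) ^ 2 = n * (n - 1) * (2 * n - 1) / 6 := by
  induction n with
  | zero => simp
  | succ n ih => rw [Finset.sum_range_succ, ih]; push_cast; ring

lemma sum_tri (n : ℕ) : ∑ i ∈ range n, ∑ j ∈ range i, (j : ℝ) = n * (n - 1) * (n - 2) / 6 := by
  induction n with
  | zero => simp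
  | succ n ih => rw [Finset.sum_range_succ, ih, sum_id]; push_cast; ring

lemma ug1 (N : ℕ) : ug N 1 = (N : ℝ) * (N - 1) / 2 := by
  rw [ug, ← sum_id]
  simp

lemma vg1 (N : ℕ) : vg N 1 = (N : ℝ) * (N - 1) / 2 := by
  rw [vg, ← sum_id N, ← Finset.sum_range_reflect (fun j => (j : ℝ)) N]
  simp

lemma Wg1 (N : ℕ) : Wg N 1 = 0 := by
  rw [Wg, ug1, vg1]; ring

lemma hu (N : ℕ) : HasDerivAt (ug N) (∑ i ∈ range N, ∑ j ∈ range i, (j : ℝ)) 1 := by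
  apply HasDerivAt.fun_sum
  intro i _
  apply HasDerivAt.fun_sum
  intro j _
  simpa using hasDerivAt_pow j (1 : ℝ)

lemma hv (N : ℕ) :
    HasDerivAt (vg N)
      (∑ i ∈ range N, ((i : ℝ) * (N - 1 - i : ℕ) + ∑ k ∈ range (N - 1 - i), (k : ℝ))) 1 := by
  apply HasDerivAt.fun_sum
  intro i _
  have h1 : HasDerivAt (fun g : ℝ => g ^ i) ((i : ℝ)) 1 := by
    simpa using hasDerivAt_pow i (1 : ℝ)
  have h2 : HasDerivAt (fun g : ℝ => ∑ k ∈ range (N - 1 - i), g ^ k)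
      (∑ k ∈ range (N - 1 - i), (k : ℝ)) 1 := by
    apply HasDerivAt.fun_sum
    intro k _
    simpa using hasDerivAt_pow k (1 : ℝ)
  have := h1.fun_mul h2
  simpa using this

lemma dv_eval (N : ℕ) :
    (∑ i ∈ range N, ((i : ℝ) * (N - 1 - i : ℕ) + ∑ k ∈ range (N - 1 - i), (k : ℝ)))
      = ((N:ℝ) - 1) * (N * (N - 1) / 2) - N * (N - 1) * (2 * N - 1) / 6
        + N * (N - 1) * (N - 2) / 6 := by
  have hrefl := Finset.sum_range_reflect
    (fun j => ((N - 1 - j : ℕ) : ℝ) * j + ∑ k ∈ range j, (k : ℝ)) N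
  have hcongr : ∑ i ∈ range N, ((i : ℝ) * (N - 1 - i : ℕ) + ∑ k ∈ range (N - 1 - i), (k : ℝ))
      = ∑ i ∈ range N, (((N - 1 - (N - 1 - i) : ℕ) : ℝ) * (N - 1 - i : ℕ)
          + ∑ k ∈ range (N - 1 - i), (k : ℝ)) := by
    apply Finset.sum_congr rfl
    intro i hi
    rw [mem_range] at hi
    have : N - 1 - (N - 1 - i) = i := by omega
    rw [this]
  rw [hcongr, hrefl]
  have : ∑ j ∈ range N, (((N - 1 - j : ℕ) : ℝ) * j + ∑ k ∈ range j, (k : ℝ))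
      = ∑ j ∈ range N, ((((N:ℝ) - 1) * j - (j:ℝ)^2) + ∑ k ∈ range j, (k : ℝ)) := by
    apply Finset.sum_congr rfl
    intro j hj
    rw [mem_range] at hj
    have h1 : ((N - 1 - j : ℕ) : ℝ) = (N : ℝ) - 1 - j := by
      have : (N - 1 - j : ℕ) = N - 1 - j := rfl
      push_cast [Nat.cast_sub (by omega : j ≤ N - 1), Nat.cast_sub (by omega : 1 ≤ N)]
      ring
    rw [h1]; ring
  rw [this, Finset.sum_add_distrib, Finset.sum_sub_distrib, ← Finset.mul_sum,
    sum_id, sum_sq, sum_tri]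

lemma hW (N : ℕ) (hN : 2 ≤ N) :
    HasDerivAt (Wg N) ((N : ℝ) * (N - 1) * (N - 2) / 3) 1 := by
  have h1 : HasDerivAt (fun g : ℝ => g ^ N) ((N : ℝ)) 1 := by
    simpa using hasDerivAt_pow N (1 : ℝ)
  have h2 : HasDerivAt (fun g : ℝ => g ^ 2) ((2 : ℝ)) 1 := by
    simpa using hasDerivAt_pow 2 (1 : ℝ)
  have := (h1.fun_mul (hu N)).fun_sub (h2.fun_mul (hv N))
  refine this.congr_deriv ?_
  rw [dv_eval, ug1, vg1, sum_tri]
  push_cast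
  ring


/-- The limit as `g → 1` of
`χ₀⁻(g) = −(N²/(16g²)) g^N/(g^N−1)² + (N/(16g²)) (g^N + g²)/((g^N−1)(g²−1))`
equals `(N² − 3N + 2)/96` for integer `N ≥ 2`. -/
theorem negative_parity_susceptibility_critical (N : ℕ) (hN2 : 2 ≤ N) :
    Tendsto (fun g : ℝ =>
        -((N : ℝ) ^ 2 / (16 * g ^ 2)) * (g ^ N / (g ^ N - 1) ^ 2) +
          (N : ℝ) / (16 * g ^ 2) * ((g ^ N + g ^ 2) / ((g ^ N - 1) * (g ^ 2 - 1))))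
      (nhdsWithin 1 {(1 : ℝ)}ᶜ) (nhds (((N : ℝ) ^ 2 - 3 * (N : ℝ) + 2) / 96)) := by
  have hN0 : (N : ℝ) ≠ 0 := by
    simp only [ne_eq, Nat.cast_eq_zero]; omega
  -- the continuous prefactor
  set c : ℝ → ℝ := fun g => (N : ℝ) / (16 * g ^ 2 * (Sg N g) ^ 2 * (g + 1)) with hc_def
  have hSg1 : Sg N 1 = (N : ℝ) := by simp [Sg]
  have hScont : Continuous (Sg N) := by
    unfold Sg
    exact continuous_finset_sum _ (fun i _ => continuous_pow i)
  have hdenc : Continuous (fun g : ℝ => 16 * g ^ 2 * (Sg N g) ^ 2 * (g + 1)) := by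
    continuity
  have hden1 : (16 * (1:ℝ) ^ 2 * (Sg N 1) ^ 2 * ((1:ℝ) + 1)) ≠ 0 := by
    rw [hSg1]; positivity
  have hcc : ContinuousAt c 1 := ContinuousAt.div continuousAt_const hdenc.continuousAt hden1
  have hcval : c 1 = (N : ℝ) / (16 * (N:ℝ)^2 * 2) := by
    simp [hc_def, hSg1]; ring
  have hclim : Tendsto c (nhdsWithin 1 {(1:ℝ)}ᶜ) (nhds ((N : ℝ) / (16 * (N:ℝ)^2 * 2))) := by
    rw [← hcval]
    exact hcc.tendsto.mono_left nhdsWithin_le_nhds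
  -- the slope limit
  have hslope : Tendsto (fun g : ℝ => Wg N g / (g - 1)) (nhdsWithin 1 {(1:ℝ)}ᶜ)
      (nhds ((N : ℝ) * (N - 1) * (N - 2) / 3)) := by
    have h := hasDerivAt_iff_tendsto_slope.mp (hW N hN2)
    have : slope (Wg N) 1 = fun g => Wg N g / (g - 1) := by
      funext g
      rw [slope_def_field, Wg1, sub_zero]
    rw [this] at h
    exact h
  have hprod := hclim.mul hslope
  have hlimval : (N : ℝ) / (16 * (N:ℝ)^2 * 2) * ((N : ℝ) * (N - 1) * (N - 2) / 3)
      = ((N : ℝ) ^ 2 - 3 * (N : ℝ) + 2) / 96 := by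
    field_simp
    ring
  rw [hlimval] at hprod
  -- eventual equality
  apply hprod.congr'
  have hmem : Set.Ioo (1/2 : ℝ) (3/2) ∈ nhdsWithin (1:ℝ) {(1:ℝ)}ᶜ :=
    nhdsWithin_le_nhds (Ioo_mem_nhds (by norm_num) (by norm_num))
  filter_upwards [hmem, self_mem_nhdsWithin] with g hg hg1
  rw [Set.mem_compl_singleton_iff] at hg1
  obtain ⟨hga, hgb⟩ := hg
  have hg0 : (0:ℝ) < g := by linarith
  have hgne : g ≠ 0 := ne_of_gt hg0
  have hgm1 : g - 1 ≠ 0 := sub_ne_zero.mpr hg1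
  have hgp1 : g + 1 ≠ 0 := by positivity
  have hSpos : 0 < Sg N g := by
    apply Finset.sum_pos (fun i _ => pow_pos hg0 i)
    exact nonempty_range_iff.mpr (by omega)
  have hSne : Sg N g ≠ 0 := ne_of_gt hSpos
  have hgeom : g ^ N - 1 = (g - 1) * Sg N g := by
    rw [Sg, mul_comm, geom_sum_mul]
  have hC := lemC N hN2 g
  have hg2 : g ^ 2 - 1 = (g - 1) * (g + 1) := by ring
  rw [hc_def]
  dsimp only
  rw [hgeom, hg2]
  rw [show Wg N g = ((g ^ N + g ^ 2) * Sg N g - N * g ^ N * (g + 1)) / (g - 1) by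
    rw [hC, mul_div_cancel_left₀ _ hgm1]]
  field_simp
  ring
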